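/- (Combinatorial Nullstellensatz, multilinear/hypercube corollary) Let F be a field, m ≥ 1, and let f ∈ F[X_1,...,X_m] be a polynomial with individual degree at most d in each variable, d ≥ 2. If f(a) = 0 for all a ∈ {0,1}^m, then there exist polynomials T_1,...,T_m ∈ F[X_1,...,X_m], with T_i of degree at most d-2 in X_i and at most d in each other variable, such that f = ∑_{i=1}^m X_i(1 - X_i) T_i. -/

import Mathlib

open MvPolynomial Finset

variable {F : Type} [CommRing F] {m : ℕ}

private lemma deg_mono_le {t : Fin m →₀ ℕ} {c : F} {j : Fin m}
    {n : ℕ} (h : t j ≤ n) : degreeOf j (monomial t c) ≤ n := by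
  rw [degreeOf_le_iff]
  intro s hs
  classical
  rcases (Finset.mem_singleton.mp (support_monomial_subset hs)) with rfl
  exact h

private lemma update_succ (s : Fin m →₀ ℕ) (i : Fin m) (j : ℕ) :
    s.update i j + Finsupp.single i 1 = s.update i (j + 1) := by
  classical
  ext a
  by_cases h : a = i
  · simp [h, Finsupp.coe_update, Function.update_apply]
  · simp [h, Finsupp.coe_update, Function.update_apply, Finsupp.single_apply, Ne.symm h]

private lemma monomial_reduce (i : Fin m) (s : Fin m →₀ ℕ) (c : F) :
    monomial s c = monomial (s.update i (min (s i) 1)) c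
      - X i * (1 - X i) * ∑ j ∈ Finset.range (s i - 1), monomial (s.update i j) c := by
  classical
  set A : ℕ → MvPolynomial (Fin m) F := fun n => monomial (s.update i n) c with hA
  have hX : ∀ j : ℕ, X i * (1 - X i) * monomial (s.update i j) c = A (j + 1) - A (j + 2) := by
    intro j
    have h1 : ∀ n : ℕ, X i * A n = A (n + 1) := by
      intro n
      rw [hA]
      simp only [X, monomial_mul, one_mul]
      congr 1
      rw [add_comm, update_succ]
    have h2 : X i * (1 - X i) * monomial (s.update i j) c = X i * A j - X i * (X i * A j) := by
      have : monomial (s.update i j) c = A j := rfl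
      rw [this]; ring
    rw [h2, h1, h1]
  rcases Nat.eq_zero_or_pos (s i) with h0 | hpos
  · rw [h0]
    simp only [Nat.zero_sub, Finset.range_zero, Finset.sum_empty, mul_zero, sub_zero]
    rw [show (0 : ℕ) ⊓ 1 = 0 by rfl, ← h0, Finsupp.update_self]
  · have hmin : min (s i) 1 = 1 := min_eq_right hpos
    have hsum : X i * (1 - X i) * ∑ j ∈ Finset.range (s i - 1), monomial (s.update i j) c
        = A 1 - A (s i) := by
      rw [Finset.mul_sum, Finset.sum_congr rfl fun j _ => hX j]
      have := Finset.sum_range_sub' (fun j => A (j + 1)) (s i - 1)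
      simpa [Nat.sub_add_cancel hpos] using this
    rw [hsum, hmin]
    have : A (s i) = monomial s c := by rw [hA]; simp [Finsupp.update_self]
    rw [this]
    ring

private lemma reduceVar (i : Fin m) (f : MvPolynomial (Fin m) F) :
    ∃ g T : MvPolynomial (Fin m) F,
      f = g + X i * (1 - X i) * T ∧
      degreeOf i g ≤ min (degreeOf i f) 1 ∧
      (∀ j, j ≠ i → degreeOf j g ≤ degreeOf j f) ∧
      degreeOf i T ≤ degreeOf i f - 2 ∧
      (∀ j, j ≠ i → degreeOf j T ≤ degreeOf j f) := by
  classical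
  refine ⟨∑ s ∈ f.support, monomial (s.update i (min (s i) 1)) (f.coeff s),
    -∑ s ∈ f.support, ∑ j ∈ Finset.range (s i - 1), monomial (s.update i j) (f.coeff s),
    ?_, ?_, ?_, ?_, ?_⟩
  · conv_lhs => rw [← support_sum_monomial_coeff f]
    rw [Finset.sum_congr rfl fun s _ => monomial_reduce i s (f.coeff s),
      Finset.sum_sub_distrib, ← Finset.mul_sum]
    ring
  · refine (degreeOf_sum_le _ _ _).trans (Finset.sup_le fun s hs => ?_)
    refine deg_mono_le ?_
    simp only [Finsupp.coe_update, Function.update_self]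
    exact le_min (le_trans (min_le_left _ _) (monomial_le_degreeOf i hs)) (min_le_right _ _)
  · intro j hj
    refine (degreeOf_sum_le _ _ _).trans (Finset.sup_le fun s hs => ?_)
    refine deg_mono_le ?_
    simp only [Finsupp.coe_update, Function.update_apply, if_neg hj]
    exact monomial_le_degreeOf j hs
  · rw [degreeOf_neg]
    refine (degreeOf_sum_le _ _ _).trans (Finset.sup_le fun s hs => ?_)
    refine (degreeOf_sum_le _ _ _).trans (Finset.sup_le fun j hj => ?_)
    refine deg_mono_le ?_
    simp only [Finsupp.coe_update, Function.update_self]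
    have h2 : j < s i - 1 := Finset.mem_range.mp hj
    have h3 := monomial_le_degreeOf i hs
    omega
  · intro j hj
    rw [degreeOf_neg]
    refine (degreeOf_sum_le _ _ _).trans (Finset.sup_le fun s hs => ?_)
    refine (degreeOf_sum_le _ _ _).trans (Finset.sup_le fun k _ => ?_)
    refine deg_mono_le ?_
    simp only [Finsupp.coe_update, Function.update_apply, if_neg hj]
    exact monomial_le_degreeOf j hs

private lemma reduceAll {d : ℕ} (I : Finset (Fin m)) (f : MvPolynomial (Fin m) F)
    (hdeg : ∀ j, degreeOf j f ≤ d) :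
    ∃ (g : MvPolynomial (Fin m) F) (T : Fin m → MvPolynomial (Fin m) F),
      f = g + ∑ i ∈ I, X i * (1 - X i) * T i ∧
      (∀ i ∈ I, degreeOf i g ≤ 1) ∧ (∀ j, degreeOf j g ≤ d) ∧
      (∀ i, degreeOf i (T i) ≤ d - 2 ∧ ∀ j, j ≠ i → degreeOf j (T i) ≤ d) := by
  classical
  induction I using Finset.induction_on with
  | empty => exact ⟨f, fun _ => 0, by simp, by simp, hdeg, fun i => ⟨by simp, by simp⟩⟩
  | insert _ _ hi₀ _ =>
    rename_i i₀ I ih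
    obtain ⟨g, T, hfeq, hg1, hgd, hT⟩ := ih
    obtain ⟨g', T', hgeq, hg'i, hg'j, hT'i, hT'j⟩ := reduceVar i₀ g
    refine ⟨g', Function.update T i₀ T', ?_, ?_, ?_, ?_⟩
    · have hsum : ∑ i ∈ I, X i * (1 - X i) * Function.update T i₀ T' i
          = ∑ i ∈ I, X i * (1 - X i) * T i :=
        Finset.sum_congr rfl fun i hi => by
          rw [Function.update_of_ne (show i ≠ i₀ from fun h => hi₀ (by rw [← h]; exact hi)) T' T]
      rw [Finset.sum_insert hi₀, Function.update_self, hsum, hfeq, hgeq]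
      ring
    · intro i hi
      rcases Finset.mem_insert.mp hi with rfl | hi
      · exact le_trans hg'i (min_le_right _ _)
      · have hne : i ≠ i₀ := fun h => hi₀ (h ▸ hi)
        exact le_trans (hg'j i hne) (hg1 i hi)
    · intro j
      by_cases hj : j = i₀
      · subst hj
        exact le_trans hg'i (le_trans (min_le_left _ _) (hgd j))
      · exact le_trans (hg'j j hj) (hgd j)
    · intro i
      by_cases hii : i = i₀
      · subst hii
        rw [Function.update_self]
        constructor
        · exact le_trans hT'i (Nat.sub_le_sub_right (hgd i) 2)
        · intro j hj
          exact le_trans (hT'j j hj) (hgd j)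
      · rw [Function.update_of_ne hii]
        exact hT i

private lemma multilinear_eq_zero {F : Type} [Field F] {m : ℕ} (g : MvPolynomial (Fin m) F)
    (hml : ∀ i, ∀ s ∈ g.support, s i ≤ 1)
    (hv : ∀ a : Fin m → Bool, eval (fun i => if a i then (1 : F) else 0) g = 0) : g = 0 := by
  classical
  by_contra hg
  obtain ⟨s, hs, hmin⟩ := Finset.exists_min_image g.support (fun s => s.support.card)
    (support_nonempty.mpr hg)
  set v : Fin m → F := fun i => if (i ∈ s.support : Bool) then (1 : F) else 0 with hvdef
  have hvi : ∀ i, v i = if i ∈ s.support then (1 : F) else 0 := by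
    intro i; simp [hvdef]
  have heval : eval v g = g.coeff s := by
    rw [eval_eq]
    rw [Finset.sum_eq_single s]
    · rw [Finset.prod_eq_one fun i hi => by rw [hvi, if_pos hi, one_pow], mul_one]
    · intro t ht htne
      by_cases hsub : t.support ⊆ s.support
      · exfalso
        have hcard := hmin t ht
        have hset : t.support = s.support := Finset.eq_of_subset_of_card_le hsub hcard
        apply htne
        ext i
        by_cases hi : i ∈ s.support
        · have h1 : t i ≤ 1 := hml i t ht
          have h2 : s i ≤ 1 := hml i s hs
          have h3 : t i ≠ 0 := Finsupp.mem_support_iff.mp (hset ▸ hi)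
          have h4 : s i ≠ 0 := Finsupp.mem_support_iff.mp hi
          omega
        · have h3 : t i = 0 := Finsupp.notMem_support_iff.mp (fun h => hi (hset ▸ h))
          have h4 : s i = 0 := Finsupp.notMem_support_iff.mp hi
          omega
      · obtain ⟨i, hit, his⟩ := Finset.not_subset.mp hsub
        have : v i ^ t i = 0 := by
          rw [hvi, if_neg his]
          exact zero_pow (Finsupp.mem_support_iff.mp hit)
        rw [Finset.prod_eq_zero hit this, mul_zero]
    · intro h
      exact absurd hs h
  have := hv (fun i => (i ∈ s.support : Bool))
  rw [show (fun i => if ((i ∈ s.support : Bool) : Prop) then (1:F) else 0) = v from rfl] at this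
  rw [heval] at this
  exact Finsupp.mem_support_iff.mp hs this

/-- Combinatorial nullstellensatz, hypercube corollary: if `f` has individual degrees at
most `d ≥ 2` and vanishes on `{0,1}^m`, then `f = ∑ i, X i (1 - X i) T i` where `T i` has
degree at most `d - 2` in `X i` and at most `d` in the other variables. -/
theorem stmt8 (F : Type) [Field F] (m : ℕ) (hm : 1 ≤ m) (d : ℕ) (hd : 2 ≤ d)
    (f : MvPolynomial (Fin m) F) (hdeg : ∀ i, f.degreeOf i ≤ d)
    (hvanish : ∀ a : Fin m → Bool, eval (fun i => if a i then (1 : F) else 0) f = 0) :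
    ∃ T : Fin m → MvPolynomial (Fin m) F,
      (∀ i, (T i).degreeOf i ≤ d - 2 ∧ ∀ j, j ≠ i → (T i).degreeOf j ≤ d) ∧
      f = ∑ i, X i * (1 - X i) * T i := by
  obtain ⟨g, T, hfeq, hg1, hgd, hT⟩ := reduceAll Finset.univ f hdeg
  have hg0 : g = 0 := by
    apply multilinear_eq_zero
    · intro i s hs
      exact degreeOf_le_iff.mp (hg1 i (Finset.mem_univ i)) s hs
    · intro a
      have h := hvanish a
      rw [hfeq, map_add, map_sum] at h
      have hz : ∀ i ∈ Finset.univ,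
          eval (fun i => if a i then (1 : F) else 0) (X i * (1 - X i) * T i) = 0 := by
        intro i _
        rw [map_mul, map_mul]
        have : eval (fun i => if a i then (1 : F) else 0) (X i)
            * eval (fun i => if a i then (1 : F) else 0) (1 - X i) = 0 := by
          rw [map_sub, map_one, eval_X]
          cases a i <;> simp
        rw [this, zero_mul]
      rw [Finset.sum_congr rfl hz, Finset.sum_const_zero, add_zero] at h
      exact h
  exact ⟨T, hT, by rw [hfeq, hg0, zero_add]⟩
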